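/- arXiv:2304.02385 — 4 statements merged into one kernel-verified Lean document; each statement's English description precedes it below -/
import Mathlib

section
/- For all real numbers a and b, the integral over ℝ of 1/((1+(t-a)^2)(1+(t-b)^2)) dt equals 2π/(4+(a-b)^2). -/
open MeasureTheory Real Filter Topology

private lemma aux_inv_atBot : Tendsto (fun t : ℝ => 1 / t) atBot (𝓝 0) := by
  have h : Tendsto (fun t : ℝ => (-t)⁻¹) atBot (𝓝 0) :=
    tendsto_inv_atTop_zero.comp tendsto_neg_atBot_atTop
  have h2 := h.neg
  simp only [neg_zero] at h2
  refine h2.congr fun t => ?_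
  rw [one_div, ← inv_neg, neg_neg]

private lemma aux_inv_atTop : Tendsto (fun t : ℝ => 1 / t) atTop (𝓝 0) := by
  simpa [one_div] using tendsto_inv_atTop_zero (𝕜 := ℝ)

private lemma aux_ratio {l : Filter ℝ} (hinv : Tendsto (fun t : ℝ => 1 / t) l (𝓝 0))
    (hne : ∀ᶠ t in l, t ≠ 0) (a b : ℝ) :
    Tendsto (fun t => (1 + (t - a) ^ 2) / (1 + (t - b) ^ 2)) l (𝓝 1) := by
  have hnum : Tendsto (fun t : ℝ => (1 / t) ^ 2 + (1 - a * (1 / t)) ^ 2) l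
      (𝓝 ((0 : ℝ) ^ 2 + (1 - a * 0) ^ 2)) :=
    (hinv.pow 2).add (((hinv.const_mul a).const_sub 1).pow 2)
  have hden : Tendsto (fun t : ℝ => (1 / t) ^ 2 + (1 - b * (1 / t)) ^ 2) l
      (𝓝 ((0 : ℝ) ^ 2 + (1 - b * 0) ^ 2)) :=
    (hinv.pow 2).add (((hinv.const_mul b).const_sub 1).pow 2)
  norm_num at hnum hden
  have h := hnum.div hden one_ne_zero
  norm_num at h
  refine h.congr' ?_
  filter_upwards [hne] with t ht
  have h2 : (0:ℝ) < 1 + (t - b) ^ 2 := by positivity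
  simp only [Pi.div_apply]
  field_simp

private lemma aux_frac {l : Filter ℝ} (hinv : Tendsto (fun t : ℝ => 1 / t) l (𝓝 0))
    (hne : ∀ᶠ t in l, t ≠ 0) :
    Tendsto (fun u : ℝ => u / (1 + u ^ 2)) l (𝓝 0) := by
  have h : Tendsto (fun u : ℝ => (1 / u) / ((1 / u) ^ 2 + 1)) l (𝓝 ((0 : ℝ) / ((0:ℝ) ^ 2 + 1))) :=
    hinv.div ((hinv.pow 2).add_const 1) (by norm_num)
  norm_num at h
  refine h.congr' ?_
  filter_upwards [hne] with u hu
  have h2 : (0:ℝ) < 1 + u ^ 2 := by positivity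
  field_simp

private lemma aux_integrable (a b : ℝ) :
    Integrable (fun t : ℝ => 1 / ((1 + (t - a) ^ 2) * (1 + (t - b) ^ 2))) := by
  have hg : Integrable (fun t : ℝ => 1 / (1 + (t - a) ^ 2)) := by
    simpa using (integrable_inv_one_add_sq.comp_sub_right a)
  refine hg.mono ?_ ?_
  · apply Continuous.aestronglyMeasurable
    exact Continuous.div continuous_const (by continuity) (fun t => by positivity)
  · refine Filter.Eventually.of_forall fun t => ?_
    have h1 : (0:ℝ) < 1 + (t - a) ^ 2 := by positivity
    have h2 : (0:ℝ) < (1 + (t - a) ^ 2) * (1 + (t - b) ^ 2) := by positivity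
    rw [Real.norm_eq_abs, Real.norm_eq_abs, abs_of_nonneg (by positivity),
      abs_of_nonneg (by positivity)]
    apply one_div_le_one_div_of_le h1
    nlinarith [sq_nonneg (t - b)]

theorem cauchy_kernel_convolution (a b : ℝ) :
    ∫ t : ℝ, 1 / ((1 + (t - a) ^ 2) * (1 + (t - b) ^ 2)) =
      2 * π / (4 + (a - b) ^ 2) := by
  have hne_top : ∀ᶠ t : ℝ in atTop, t ≠ 0 := eventually_ne_atTop 0
  have hne_bot : ∀ᶠ t : ℝ in atBot, t ≠ 0 := eventually_ne_atBot 0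
  have hshift_top : ∀ c : ℝ, Tendsto (fun t : ℝ => t - c) atTop atTop := fun c => by
    simpa [sub_eq_add_neg] using tendsto_atTop_add_const_right atTop (-c) tendsto_id
  have hshift_bot : ∀ c : ℝ, Tendsto (fun t : ℝ => t - c) atBot atBot := fun c => by
    simpa [sub_eq_add_neg] using tendsto_atBot_add_const_right atBot (-c) tendsto_id
  have harc_top : ∀ c : ℝ, Tendsto (fun t : ℝ => arctan (t - c)) atTop (𝓝 (π / 2)) := fun c =>
    (tendsto_arctan_atTop.mono_right nhdsWithin_le_nhds).comp (hshift_top c)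
  have harc_bot : ∀ c : ℝ, Tendsto (fun t : ℝ => arctan (t - c)) atBot (𝓝 (-(π / 2))) := fun c =>
    (tendsto_arctan_atBot.mono_right nhdsWithin_le_nhds).comp (hshift_bot c)
  rcases eq_or_ne a b with rfl | hc
  · -- case a = b
    set G : ℝ → ℝ := fun t => (1 / 2) * (arctan (t - a) + (t - a) / (1 + (t - a) ^ 2)) with hG
    have hderiv : ∀ t : ℝ, HasDerivAt G (1 / ((1 + (t - a) ^ 2) * (1 + (t - a) ^ 2))) t := by
      intro t
      have hu : HasDerivAt (fun t : ℝ => t - a) 1 t := (hasDerivAt_id t).sub_const a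
      have hsq : HasDerivAt (fun t : ℝ => 1 + (t - a) ^ 2) (2 * (t - a)) t := by
        simpa using (hu.pow 2).const_add 1
      have harc : HasDerivAt (fun t : ℝ => arctan (t - a)) (1 / (1 + (t - a) ^ 2) * 1) t :=
        (Real.hasDerivAt_arctan (t - a)).comp (h₂ := arctan) t hu
      have hdiv : HasDerivAt (fun t : ℝ => (t - a) / (1 + (t - a) ^ 2))
          ((1 * (1 + (t - a) ^ 2) - (t - a) * (2 * (t - a))) / (1 + (t - a) ^ 2) ^ 2) t :=
        hu.div hsq (by positivity)
      have H := (harc.add hdiv).const_mul (1 / 2)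
      refine H.congr_deriv ?_
      have h1 : (0:ℝ) < 1 + (t - a) ^ 2 := by positivity
      field_simp
      ring
    have hfrac_top : Tendsto (fun t : ℝ => (t - a) / (1 + (t - a) ^ 2)) atTop (𝓝 0) :=
      (aux_frac aux_inv_atTop hne_top).comp (hshift_top a)
    have hfrac_bot : Tendsto (fun t : ℝ => (t - a) / (1 + (t - a) ^ 2)) atBot (𝓝 0) :=
      (aux_frac aux_inv_atBot hne_bot).comp (hshift_bot a)
    have htop : Tendsto G atTop (𝓝 ((1 / 2) * (π / 2 + 0))) :=
      ((harc_top a).add hfrac_top).const_mul (1 / 2)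
    have hbot : Tendsto G atBot (𝓝 ((1 / 2) * (-(π / 2) + 0))) :=
      ((harc_bot a).add hfrac_bot).const_mul (1 / 2)
    rw [MeasureTheory.integral_of_hasDerivAt_of_tendsto hderiv (aux_integrable a a) hbot htop]
    ring
  · -- case a ≠ b
    have hba : b - a ≠ 0 := sub_ne_zero.mpr (Ne.symm hc)
    have h4 : (0:ℝ) < 4 + (b - a) ^ 2 := by positivity
    set A : ℝ := 2 / ((b - a) * (4 + (b - a) ^ 2)) with hA
    set B : ℝ := 1 / (4 + (b - a) ^ 2) with hB
    set G : ℝ → ℝ := fun t =>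
      A / 2 * (Real.log (1 + (t - a) ^ 2) - Real.log (1 + (t - b) ^ 2)) +
        B * (arctan (t - a) + arctan (t - b)) with hG
    have hderiv : ∀ t : ℝ, HasDerivAt G (1 / ((1 + (t - a) ^ 2) * (1 + (t - b) ^ 2))) t := by
      intro t
      have hua : HasDerivAt (fun t : ℝ => t - a) 1 t := (hasDerivAt_id t).sub_const a
      have hub : HasDerivAt (fun t : ℝ => t - b) 1 t := (hasDerivAt_id t).sub_const b
      have hsqa : HasDerivAt (fun t : ℝ => 1 + (t - a) ^ 2) (2 * (t - a)) t := by
        simpa using (hua.pow 2).const_add 1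
      have hsqb : HasDerivAt (fun t : ℝ => 1 + (t - b) ^ 2) (2 * (t - b)) t := by
        simpa using (hub.pow 2).const_add 1
      have hloga : HasDerivAt (fun t : ℝ => Real.log (1 + (t - a) ^ 2))
          (2 * (t - a) / (1 + (t - a) ^ 2)) t := hsqa.log (by positivity)
      have hlogb : HasDerivAt (fun t : ℝ => Real.log (1 + (t - b) ^ 2))
          (2 * (t - b) / (1 + (t - b) ^ 2)) t := hsqb.log (by positivity)
      have harca : HasDerivAt (fun t : ℝ => arctan (t - a)) (1 / (1 + (t - a) ^ 2) * 1) t :=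
        (Real.hasDerivAt_arctan (t - a)).comp (h₂ := arctan) t hua
      have harcb : HasDerivAt (fun t : ℝ => arctan (t - b)) (1 / (1 + (t - b) ^ 2) * 1) t :=
        (Real.hasDerivAt_arctan (t - b)).comp (h₂ := arctan) t hub
      have H := ((hloga.sub hlogb).const_mul (A / 2)).add ((harca.add harcb).const_mul B)
      refine H.congr_deriv ?_
      have h1 : (0:ℝ) < 1 + (t - a) ^ 2 := by positivity
      have h2 : (0:ℝ) < 1 + (t - b) ^ 2 := by positivity
      rw [hA, hB]
      field_simp
      ring
    have hlog_top : Tendsto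
        (fun t : ℝ => Real.log (1 + (t - a) ^ 2) - Real.log (1 + (t - b) ^ 2)) atTop (𝓝 0) := by
      have hr := aux_ratio aux_inv_atTop hne_top a b
      have h := (Real.continuousAt_log one_ne_zero).tendsto.comp hr
      rw [Real.log_one] at h
      exact h.congr fun t => Real.log_div (by positivity) (by positivity)
    have hlog_bot : Tendsto
        (fun t : ℝ => Real.log (1 + (t - a) ^ 2) - Real.log (1 + (t - b) ^ 2)) atBot (𝓝 0) := by
      have hr := aux_ratio aux_inv_atBot hne_bot a b
      have h := (Real.continuousAt_log one_ne_zero).tendsto.comp hr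
      rw [Real.log_one] at h
      exact h.congr fun t => Real.log_div (by positivity) (by positivity)
    have htop : Tendsto G atTop (𝓝 (A / 2 * 0 + B * (π / 2 + π / 2))) :=
      (hlog_top.const_mul (A / 2)).add (((harc_top a).add (harc_top b)).const_mul B)
    have hbot : Tendsto G atBot (𝓝 (A / 2 * 0 + B * (-(π / 2) + -(π / 2)))) :=
      (hlog_bot.const_mul (A / 2)).add (((harc_bot a).add (harc_bot b)).const_mul B)
    rw [MeasureTheory.integral_of_hasDerivAt_of_tendsto hderiv (aux_integrable a b) hbot htop]
    have hab : (a - b) ^ 2 = (b - a) ^ 2 := by ring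
    rw [hB, hab]
    field_simp
    ring
end

section
/- Let 1 ≤ p < ∞, δ > 0, and let f : ℝ → ℂ be continuously differentiable with f ∈ L^p(ℝ) and f' ∈ L^p(ℝ). For each k ∈ ℤ choose t_k ∈ [kδ, (k+1)δ]. Then (∑_{k∈ℤ} |f(t_k)|^p)^{1/p} ≤ δ^{-1/p} ‖f‖_p + δ^{1-1/p} ‖f'‖_p. -/
open MeasureTheory Real Set
open scoped ENNReal NNReal

theorem sample_sum_bound (p δ : ℝ) (hp : 1 ≤ p) (hδ : 0 < δ)
    (f : ℝ → ℂ) (hf : ContDiff ℝ 1 f)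
    (hfp : MemLp f (ENNReal.ofReal p) volume)
    (hf'p : MemLp (deriv f) (ENNReal.ofReal p) volume)
    (t : ℤ → ℝ) (ht : ∀ k : ℤ, t k ∈ Set.Icc ((k : ℝ) * δ) ((k + 1 : ℝ) * δ)) :
    (∑' k : ℤ, ‖f (t k)‖ ^ p) ^ (1 / p) ≤
      δ ^ (-1 / p) * (eLpNorm f (ENNReal.ofReal p) volume).toReal +
        δ ^ (1 - 1 / p) * (eLpNorm (deriv f) (ENNReal.ofReal p) volume).toReal := by
  have hp0 : (0:ℝ) < p := lt_of_lt_of_le one_pos hp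
  set q : ℝ≥0∞ := ENNReal.ofReal p with hqdef
  have hq0 : q ≠ 0 := by simp [hqdef, ENNReal.ofReal_eq_zero]; linarith
  have hqt : q ≠ ∞ := ENNReal.ofReal_ne_top
  have hqp : q.toReal = p := ENNReal.toReal_ofReal hp0.le
  have hfc : Continuous f := hf.continuous
  have hf'c : Continuous (deriv f) := hf.continuous_deriv le_rfl
  set d : ℝ≥0∞ := ENNReal.ofReal δ with hddef
  have hd0 : d ≠ 0 := by simp [hddef, ENNReal.ofReal_eq_zero]; linarith
  have hdt : d ≠ ∞ := ENNReal.ofReal_ne_top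
  set I : ℤ → Set ℝ := fun k => Icc ((k:ℝ)*δ) ((k+1:ℝ)*δ) with hIdef
  have hvol : ∀ k : ℤ, volume (I k) = d := by
    intro k
    rw [hIdef]
    simp only [Real.volume_Icc, hddef]
    congr 1
    ring
  set F : ℤ → ℝ≥0∞ := fun k => ∫⁻ x in I k, (‖f x‖₊ : ℝ≥0∞) ^ p with hFdef
  set G : ℤ → ℝ≥0∞ := fun k => ∫⁻ x in I k, (‖deriv f x‖₊ : ℝ≥0∞) ^ p with hGdef
  -- Hölder on each interval
  have holder : ∀ (g : ℝ → ℂ), Continuous g → ∀ k : ℤ,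
      (∫⁻ x in I k, (‖g x‖₊ : ℝ≥0∞)) ≤
        d ^ (1 - 1/p) * (∫⁻ x in I k, (‖g x‖₊ : ℝ≥0∞) ^ p) ^ (1/p) := by
    intro g hg k
    have h1q : (1 : ℝ≥0∞) ≤ q := by
      rw [hqdef]
      exact ENNReal.one_le_ofReal.mpr hp
    have h := eLpNorm_le_eLpNorm_mul_rpow_measure_univ (p := 1) (q := q) h1q
      (hg.aestronglyMeasurable (μ := volume.restrict (I k)))
    rw [eLpNorm_one_eq_lintegral_enorm, eLpNorm_eq_lintegral_rpow_enorm_toReal hq0 hqt, hqp,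
      Measure.restrict_apply_univ, hvol k] at h
    simp only [enorm_eq_nnnorm] at h
    simpa [ENNReal.toReal_one, mul_comm] using h
  -- the key pointwise bound
  have key : ∀ k : ℤ, (‖f (t k)‖₊ : ℝ≥0∞) ≤ d ^ (-1/p) * F k ^ (1/p) + d ^ (1-1/p) * G k ^ (1/p) := by
    intro k
    have htI : t k ∈ I k := ht k
    have hint' : IntegrableOn (deriv f) (I k) := hf'c.integrableOn_Icc
    set C : ℝ := ∫ s in I k, ‖deriv f s‖ with hC
    have hC0 : 0 ≤ C := integral_nonneg fun s => norm_nonneg _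
    have step1 : ∀ x ∈ I k, ‖f (t k)‖ ≤ ‖f x‖ + C := by
      intro x hx
      have hderiv : (∫ s in x..(t k), deriv f s) = f (t k) - f x :=
        intervalIntegral.integral_deriv_eq_sub
          (fun y _ => (hf.differentiable one_ne_zero) y)
          (hf'c.intervalIntegrable _ _)
      have hsub : Set.uIoc x (t k) ⊆ I k := by
        refine subset_trans Set.uIoc_subset_uIcc ?_
        have h1 : x ∈ uIcc ((k:ℝ)*δ) ((k+1:ℝ)*δ) := by
          rw [uIcc_of_le (by nlinarith : (k:ℝ)*δ ≤ (k+1:ℝ)*δ)]; exact hx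
        have h2 : t k ∈ uIcc ((k:ℝ)*δ) ((k+1:ℝ)*δ) := by
          rw [uIcc_of_le (by nlinarith : (k:ℝ)*δ ≤ (k+1:ℝ)*δ)]; exact htI
        have := Set.uIcc_subset_uIcc h1 h2
        rwa [uIcc_of_le (by nlinarith : (k:ℝ)*δ ≤ (k+1:ℝ)*δ)] at this
      have h2 : ‖f (t k) - f x‖ ≤ C := by
        rw [← hderiv]
        refine (intervalIntegral.norm_integral_le_integral_norm_uIoc).trans ?_
        exact setIntegral_mono_set hint'.norm (ae_of_all _ fun s => norm_nonneg _)
          (HasSubset.Subset.eventuallyLE hsub)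
      calc ‖f (t k)‖ = ‖f x + (f (t k) - f x)‖ := by ring_nf
        _ ≤ ‖f x‖ + ‖f (t k) - f x‖ := norm_add_le _ _
        _ ≤ ‖f x‖ + C := by linarith
    have step2 : ∀ x ∈ I k, (‖f (t k)‖₊ : ℝ≥0∞) ≤ (‖f x‖₊ : ℝ≥0∞) + ENNReal.ofReal C := by
      intro x hx
      rw [← enorm_eq_nnnorm, ← enorm_eq_nnnorm, ← ofReal_norm_eq_enorm, ← ofReal_norm_eq_enorm,
        ← ENNReal.ofReal_add (norm_nonneg _) hC0]
      exact ENNReal.ofReal_le_ofReal (step1 x hx)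
    have step3 : d * (‖f (t k)‖₊ : ℝ≥0∞) ≤ (∫⁻ x in I k, (‖f x‖₊ : ℝ≥0∞)) + d * ENNReal.ofReal C := by
      have hm : Measurable fun x => ((‖f x‖₊ : ℝ≥0∞) + ENNReal.ofReal C) :=
        (hfc.measurable.nnnorm.coe_nnreal_ennreal).add measurable_const
      calc d * (‖f (t k)‖₊ : ℝ≥0∞) = ∫⁻ _ in I k, (‖f (t k)‖₊ : ℝ≥0∞) := by
            rw [setLIntegral_const, hvol k, mul_comm]
        _ ≤ ∫⁻ x in I k, ((‖f x‖₊ : ℝ≥0∞) + ENNReal.ofReal C) := setLIntegral_mono hm step2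
        _ = (∫⁻ x in I k, (‖f x‖₊ : ℝ≥0∞)) + d * ENNReal.ofReal C := by
            rw [lintegral_add_right _ measurable_const, lintegral_const,
              Measure.restrict_apply_univ, hvol k, mul_comm]
    have step4 : ENNReal.ofReal C = ∫⁻ x in I k, (‖deriv f x‖₊ : ℝ≥0∞) :=
      by simpa only [enorm_eq_nnnorm] using ofReal_integral_norm_eq_lintegral_enorm hint'
    have h5 : d * (‖f (t k)‖₊ : ℝ≥0∞) ≤ d ^ (1-1/p) * F k ^ (1/p) + d * (d ^ (1-1/p) * G k ^ (1/p)) := by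
      refine step3.trans (add_le_add (holder f hfc k) ?_)
      rw [step4]
      exact mul_le_mul_right (holder (deriv f) hf'c k) d
    have hdd : d * d ^ (-1/p) = d ^ (1-1/p) := by
      rw [show (1 : ℝ) - 1/p = 1 + (-1/p) by ring, ENNReal.rpow_add 1 (-1/p) hd0 hdt,
        ENNReal.rpow_one]
    rw [← ENNReal.mul_le_mul_iff_right hd0 hdt]
    refine h5.trans (le_of_eq ?_)
    rw [mul_add]
    congr 1
    rw [← mul_assoc, hdd]
  -- sums
  set u : ℤ → ℝ≥0∞ := fun k => d ^ (-1/p) * F k ^ (1/p) with hudef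
  set v : ℤ → ℝ≥0∞ := fun k => d ^ (1-1/p) * G k ^ (1/p) with hvdef
  set S : ℝ≥0∞ := ∑' k : ℤ, (‖f (t k)‖₊ : ℝ≥0∞) ^ p with hSdef
  have hmono : S ≤ ∑' k : ℤ, (u k + v k) ^ p :=
    ENNReal.tsum_le_tsum fun k => ENNReal.rpow_le_rpow (key k) hp0.le
  have mink : (∑' k : ℤ, (u k + v k) ^ p) ^ (1/p) ≤
      (∑' k : ℤ, u k ^ p) ^ (1/p) + (∑' k : ℤ, v k ^ p) ^ (1/p) := by
    have h := ENNReal.lintegral_Lp_add_le (μ := Measure.count (α := ℤ)) (f := u) (g := v)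
      (measurable_of_countable u).aemeasurable (measurable_of_countable v).aemeasurable hp
    simpa [lintegral_count] using h
  have hpinv : (1/p) * p = 1 := by field_simp
  have pull : ∀ (c : ℝ≥0∞) (w : ℤ → ℝ≥0∞),
      (∑' k : ℤ, (c * w k ^ (1/p)) ^ p) ^ (1/p) = c * (∑' k : ℤ, w k) ^ (1/p) := by
    intro c w
    have h1 : ∀ k : ℤ, (c * w k ^ (1/p)) ^ p = c ^ p * w k := by
      intro k
      rw [ENNReal.mul_rpow_of_nonneg _ _ hp0.le, ← ENNReal.rpow_mul, hpinv, ENNReal.rpow_one]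
    simp_rw [h1]
    rw [ENNReal.tsum_mul_left, ENNReal.mul_rpow_of_nonneg _ _ (by positivity : (0:ℝ) ≤ 1/p),
      ← ENNReal.rpow_mul]
    rw [show p * (1/p) = 1 by field_simp, ENNReal.rpow_one]
  -- tiling
  have tile : ∀ (g : ℝ → ℂ), Continuous g →
      (∑' k : ℤ, ∫⁻ x in I k, (‖g x‖₊ : ℝ≥0∞) ^ p) ≤ ∫⁻ x, (‖g x‖₊ : ℝ≥0∞) ^ p := by
    intro g hg
    have hcong : ∀ k : ℤ, (∫⁻ x in I k, (‖g x‖₊ : ℝ≥0∞) ^ p)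
        = ∫⁻ x in Ico ((k:ℝ)*δ) ((k+1:ℝ)*δ), (‖g x‖₊ : ℝ≥0∞) ^ p := by
      intro k
      rw [hIdef]
      exact (setLIntegral_congr Ico_ae_eq_Icc).symm
    have hdisj : Pairwise (Function.onFun Disjoint fun k : ℤ => Ico ((k:ℝ)*δ) ((k+1:ℝ)*δ)) := by
      intro i j hij
      rcases lt_or_gt_of_ne hij with h | h
      · refine Set.Ico_disjoint_Ico.mpr ?_
        have hij' : (i:ℝ) + 1 ≤ j := by exact_mod_cast h
        refine le_trans (min_le_left _ _) (le_trans ?_ (le_max_right _ _))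
        nlinarith
      · refine Set.Ico_disjoint_Ico.mpr ?_
        have hij' : (j:ℝ) + 1 ≤ i := by exact_mod_cast h
        refine le_trans (min_le_right _ _) (le_trans ?_ (le_max_left _ _))
        nlinarith
    calc (∑' k : ℤ, ∫⁻ x in I k, (‖g x‖₊ : ℝ≥0∞) ^ p)
        = ∑' k : ℤ, ∫⁻ x in Ico ((k:ℝ)*δ) ((k+1:ℝ)*δ), (‖g x‖₊ : ℝ≥0∞) ^ p :=
          tsum_congr hcong
      _ = ∫⁻ x in ⋃ k : ℤ, Ico ((k:ℝ)*δ) ((k+1:ℝ)*δ), (‖g x‖₊ : ℝ≥0∞) ^ p :=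
          (lintegral_iUnion (fun _ => measurableSet_Ico) hdisj _).symm
      _ ≤ ∫⁻ x, (‖g x‖₊ : ℝ≥0∞) ^ p := setLIntegral_le_lintegral _ _
  -- eLpNorm expressions
  have hNf : eLpNorm f q volume = (∫⁻ x, (‖f x‖₊ : ℝ≥0∞) ^ p) ^ (1/p) := by
    rw [eLpNorm_eq_lintegral_rpow_enorm_toReal hq0 hqt, hqp]; simp only [enorm_eq_nnnorm]
  have hNf' : eLpNorm (deriv f) q volume = (∫⁻ x, (‖deriv f x‖₊ : ℝ≥0∞) ^ p) ^ (1/p) := by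
    rw [eLpNorm_eq_lintegral_rpow_enorm_toReal hq0 hqt, hqp]; simp only [enorm_eq_nnnorm]
  have main : S ^ (1/p) ≤ d ^ (-1/p) * eLpNorm f q volume + d ^ (1-1/p) * eLpNorm (deriv f) q volume := by
    calc S ^ (1/p) ≤ (∑' k : ℤ, (u k + v k) ^ p) ^ (1/p) :=
          ENNReal.rpow_le_rpow hmono (by positivity)
      _ ≤ (∑' k : ℤ, u k ^ p) ^ (1/p) + (∑' k : ℤ, v k ^ p) ^ (1/p) := mink
      _ = d ^ (-1/p) * (∑' k : ℤ, F k) ^ (1/p) + d ^ (1-1/p) * (∑' k : ℤ, G k) ^ (1/p) := by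
          rw [hudef, hvdef, pull, pull]
      _ ≤ d ^ (-1/p) * eLpNorm f q volume + d ^ (1-1/p) * eLpNorm (deriv f) q volume := by
          rw [hNf, hNf']
          gcongr
          · exact tile f hfc
          · exact tile (deriv f) hf'c
  -- finiteness of RHS
  have hdne : ∀ r : ℝ, d ^ r ≠ ∞ := by
    intro r
    rw [hddef, ENNReal.ofReal_rpow_of_pos hδ]
    exact ENNReal.ofReal_ne_top
  have hR1 : d ^ (-1/p) * eLpNorm f q volume ≠ ∞ :=
    ENNReal.mul_ne_top (hdne _) hfp.2.ne
  have hR2 : d ^ (1-1/p) * eLpNorm (deriv f) q volume ≠ ∞ :=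
    ENNReal.mul_ne_top (hdne _) hf'p.2.ne
  have hRne : d ^ (-1/p) * eLpNorm f q volume + d ^ (1-1/p) * eLpNorm (deriv f) q volume ≠ ∞ :=
    ENNReal.add_ne_top.mpr ⟨hR1, hR2⟩
  -- convert to real
  have hSR : S.toReal = ∑' k : ℤ, ‖f (t k)‖ ^ p := by
    rw [hSdef, ENNReal.tsum_toReal_eq (fun k => ENNReal.rpow_ne_top_of_nonneg hp0.le ENNReal.coe_ne_top)]
    exact tsum_congr fun k => by rw [← ENNReal.toReal_rpow]; simp
  have hdr : ∀ r : ℝ, (d ^ r).toReal = δ ^ r := by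
    intro r
    rw [← ENNReal.toReal_rpow, hddef, ENNReal.toReal_ofReal hδ.le]
  have final := ENNReal.toReal_mono hRne main
  rw [ENNReal.toReal_add hR1 hR2, ENNReal.toReal_mul, ENNReal.toReal_mul, hdr, hdr,
    ← ENNReal.toReal_rpow, hSR] at final
  exact final
end

section
/- Let 1 ≤ p < ∞, δ > 0, and f : ℝ → ℂ continuously differentiable with f, f' ∈ L^p(ℝ). Let μ be a positive Borel measure on ℝ with M(δ) := sup_{x∈ℝ} μ([x, x+δ)) < ∞. Then ∫_ℝ |f|^p dμ ≤ M(δ) · (δ^{-1/p} ‖f‖_p + δ^{1-1/p} ‖f'‖_p)^p. -/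
open MeasureTheory Real Filter Topology

lemma sq_rpow_half {x : ℝ} (hx : 0 ≤ x) (e : ℝ) : (x ^ 2) ^ (e / 2) = x ^ e := by
  rw [← Real.rpow_natCast x 2, ← Real.rpow_mul hx]
  congr 1
  ring

lemma bern {p : ℝ} (hp : 1 ≤ p) {a b : ℝ} (ha : 0 ≤ a) (hb : 0 ≤ b) :
    a ^ p + p * a ^ (p - 1) * b ≤ (a + b) ^ p := by
  rcases eq_or_lt_of_le ha with h0 | h0
  · rcases eq_or_lt_of_le hp with h1 | h1
    · subst h1; simp [← h0, Real.rpow_one]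
    · rw [← h0, Real.zero_rpow (by positivity), Real.zero_rpow (by linarith)]
      simpa using Real.rpow_nonneg hb p
  · have key := one_add_mul_self_le_rpow_one_add (s := b / a)
      (le_trans (by norm_num : (-1:ℝ) ≤ 0) (by positivity)) hp
    have h1 : (1 + b / a) ^ p = (a + b) ^ p / a ^ p := by
      rw [← Real.div_rpow (by positivity) ha]; congr 1; field_simp
    rw [h1] at key
    have h2 : a ^ p * (1 + p * (b / a)) ≤ a ^ p * ((a + b) ^ p / a ^ p) :=
      mul_le_mul_of_nonneg_left key (Real.rpow_nonneg ha p)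
    have hap : (0:ℝ) < a ^ p := Real.rpow_pos_of_pos h0 p
    rw [mul_div_cancel₀ _ (ne_of_gt hap)] at h2
    calc a ^ p + p * a ^ (p-1) * b = a ^ p * (1 + p * (b / a)) := by
          rw [Real.rpow_sub_one (ne_of_gt h0)]; field_simp
      _ ≤ (a + b) ^ p := h2

lemma key_ftc {p : ℝ} (hp : 1 ≤ p) {f : ℝ → ℂ} (hf : ContDiff ℝ 1 f)
    {c d x y : ℝ} (hcd : c ≤ d) (hx : x ∈ Set.Icc c d) (hy : y ∈ Set.Icc c d) :
    ‖f x‖ ^ p ≤ ‖f y‖ ^ p + ∫ t in c..d, p * ‖f t‖ ^ (p - 1) * ‖deriv f t‖ := by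
  have hdf : ∀ t, HasDerivAt f (deriv f t) t :=
    fun t => (hf.differentiable one_ne_zero t).hasDerivAt
  have hf'c : Continuous (deriv f) := hf.continuous_deriv le_rfl
  have hfc : Continuous f := hf.continuous
  set q : ℝ → ℝ := fun t => ‖f t‖ ^ 2 with hq_def
  have hqc : Continuous q := (hfc.norm).pow 2
  have hqnn : ∀ t, 0 ≤ q t := fun t => sq_nonneg _
  have step1 : ∀ ε : ℝ, 0 < ε →
      (q x + ε) ^ (p/2) ≤ (q y + ε) ^ (p/2)
        + ∫ t in c..d, p * (q t + ε) ^ ((p-1)/2) * ‖deriv f t‖ := by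
    intro ε hε
    set g : ℝ → ℝ := fun t => (q t + ε) ^ (p/2) with hg_def
    set D : ℝ → ℝ := fun t =>
      (2 * (inner ℝ (f t) (deriv f t) : ℝ)) * (p/2) * (q t + ε) ^ (p/2 - 1) with hD_def
    have hqpos : ∀ t, 0 < q t + ε := fun t => by positivity
    have hgd : ∀ t, HasDerivAt g (D t) t := by
      intro t
      have h1 : HasDerivAt (fun s => q s + ε) (2 * (inner ℝ (f t) (deriv f t) : ℝ)) t :=
        ((hdf t).norm_sq).add_const ε
      exact h1.rpow_const (Or.inl (ne_of_gt (hqpos t)))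
    have hDc : Continuous D := by
      have : Continuous fun t => (inner ℝ (f t) (deriv f t) : ℝ) := hfc.inner hf'c
      exact ((continuous_const.mul this).mul continuous_const).mul
        ((hqc.add continuous_const).rpow_const (fun t => Or.inl (ne_of_gt (hqpos t))))
    set B : ℝ → ℝ := fun t => p * (q t + ε) ^ ((p-1)/2) * ‖deriv f t‖ with hB_def
    have hBc : Continuous B :=
      (continuous_const.mul ((hqc.add continuous_const).rpow_const
        (fun t => Or.inl (ne_of_gt (hqpos t))))).mul hf'c.norm
    have hDB : ∀ t, |D t| ≤ B t := by
      intro t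
      have h1 : |(inner ℝ (f t) (deriv f t) : ℝ)| ≤ ‖f t‖ * ‖deriv f t‖ :=
        abs_real_inner_le_norm _ _
      have h2' : (q t) ^ ((1:ℝ)/2) = ‖f t‖ := by
        show ((‖f t‖ ^ 2 : ℝ)) ^ ((1:ℝ)/2) = ‖f t‖
        rw [sq_rpow_half (norm_nonneg _) 1, Real.rpow_one]
      have h2 : ‖f t‖ ≤ (q t + ε) ^ ((1:ℝ)/2) := by
        rw [← h2']
        exact Real.rpow_le_rpow (hqnn t) (by linarith) (by norm_num)
      have h3 : (q t + ε) ^ ((1:ℝ)/2) * (q t + ε) ^ (p/2 - 1) = (q t + ε) ^ ((p-1)/2) := by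
        rw [← Real.rpow_add (hqpos t)]; congr 1; ring
      have h12 : |(inner ℝ (f t) (deriv f t) : ℝ)| ≤ (q t + ε) ^ ((1:ℝ)/2) * ‖deriv f t‖ :=
        h1.trans (mul_le_mul_of_nonneg_right h2 (norm_nonneg _))
      have hz : (0:ℝ) ≤ (q t + ε) ^ (p/2 - 1) := Real.rpow_nonneg (hqpos t).le _
      calc |D t| = 2 * |(inner ℝ (f t) (deriv f t) : ℝ)| * (p/2) * ((q t + ε) ^ (p/2-1)) := by
            rw [hD_def]; dsimp only
            rw [abs_mul, abs_mul, abs_mul, abs_of_nonneg (by norm_num : (0:ℝ) ≤ 2),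
              abs_of_nonneg (by positivity : (0:ℝ) ≤ p/2), abs_of_nonneg hz]
        _ ≤ 2 * ((q t + ε) ^ ((1:ℝ)/2) * ‖deriv f t‖) * (p/2) * ((q t + ε) ^ (p/2-1)) := by
            gcongr
        _ = p * ((q t + ε) ^ ((1:ℝ)/2) * (q t + ε) ^ (p/2 - 1)) * ‖deriv f t‖ := by ring
        _ = B t := by rw [h3]
    have hftc : ∫ t in y..x, D t = g x - g y :=
      intervalIntegral.integral_eq_sub_of_hasDerivAt (fun t _ => hgd t)
        (hDc.intervalIntegrable y x)
    have key2 : ∀ a b : ℝ, c ≤ a → a ≤ b → b ≤ d →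
        (∫ t in a..b, |D t|) ≤ ∫ t in c..d, |D t| := fun a b ha hab hb =>
      intervalIntegral.integral_mono_interval ha hab hb
        (Filter.Eventually.of_forall fun t => abs_nonneg _) (hDc.abs.intervalIntegrable c d)
    have h5 : (∫ t in c..d, |D t|) ≤ ∫ t in c..d, B t :=
      intervalIntegral.integral_mono_on hcd (hDc.abs.intervalIntegrable c d)
        (hBc.intervalIntegrable c d) (fun t _ => hDB t)
    have habs : g x - g y ≤ ∫ t in c..d, B t := by
      rcases le_total y x with h | h
      · rw [← hftc]
        calc (∫ t in y..x, D t) ≤ ∫ t in y..x, |D t| :=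
              intervalIntegral.integral_mono_on h (hDc.intervalIntegrable _ _)
                (hDc.abs.intervalIntegrable _ _) (fun t _ => le_abs_self _)
          _ ≤ ∫ t in c..d, |D t| := key2 y x hy.1 h hx.2
          _ ≤ _ := h5
      · have heq : g x - g y = -∫ t in x..y, D t := by
          rw [← intervalIntegral.integral_symm]; exact hftc.symm
        rw [heq]
        calc (-∫ t in x..y, D t) = ∫ t in x..y, -(D t) := by
              rw [intervalIntegral.integral_neg]
          _ ≤ ∫ t in x..y, |D t| :=
              intervalIntegral.integral_mono_on h (hDc.neg.intervalIntegrable _ _)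
                (hDc.abs.intervalIntegrable _ _) (fun t _ => neg_le_abs _)
          _ ≤ ∫ t in c..d, |D t| := key2 x y hx.1 h hy.2
          _ ≤ _ := h5
    linarith [habs]
  have hlim1 : ∀ z : ℝ, Tendsto (fun n : ℕ => (q z + 1/((n:ℝ)+1)) ^ (p/2)) atTop
      (𝓝 (‖f z‖ ^ p)) := by
    intro z
    have h0 : Tendsto (fun n : ℕ => q z + 1/((n:ℝ)+1)) atTop (𝓝 (q z)) := by
      simpa using (tendsto_const_nhds (x := q z)).add tendsto_one_div_add_atTop_nhds_zero_nat
    have hcont : ContinuousAt (fun s : ℝ => s ^ (p/2)) (q z) :=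
      Real.continuousAt_rpow_const _ _ (Or.inr (by positivity))
    have := hcont.tendsto.comp h0
    simpa [Function.comp_def, hq_def, sq_rpow_half (norm_nonneg (f z)) p] using this
  have hlimI : Tendsto (fun n : ℕ =>
      ∫ t in c..d, p * (q t + 1/((n:ℝ)+1)) ^ ((p-1)/2) * ‖deriv f t‖) atTop
      (𝓝 (∫ t in c..d, p * ‖f t‖ ^ (p-1) * ‖deriv f t‖)) := by
    simp only [intervalIntegral.integral_of_le hcd]
    apply tendsto_integral_of_dominated_convergence
      (bound := fun t => p * (q t + 1) ^ ((p-1)/2) * ‖deriv f t‖)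
    · intro n
      apply Continuous.aestronglyMeasurable
      exact (continuous_const.mul ((hqc.add continuous_const).rpow_const
        (fun t => Or.inr (by linarith)))).mul hf'c.norm
    · exact ((continuous_const.mul ((hqc.add continuous_const).rpow_const
        (fun t => Or.inr (by linarith)))).mul hf'c.norm).integrableOn_Ioc
    · intro n
      apply Eventually.of_forall
      intro t
      have h1 : (0:ℝ) < q t + 1/((n:ℝ)+1) := by positivity
      rw [Real.norm_eq_abs, abs_of_nonneg (by positivity)]
      have hd1 : 1/((n:ℝ)+1) ≤ 1 := by
        rw [div_le_one (by positivity)]; linarith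
      have hmono : (q t + 1/((n:ℝ)+1)) ^ ((p-1)/2) ≤ (q t + 1) ^ ((p-1)/2) :=
        Real.rpow_le_rpow (by positivity) (by linarith) (by linarith)
      exact mul_le_mul_of_nonneg_right
        (mul_le_mul_of_nonneg_left hmono (by linarith)) (norm_nonneg _)
    · apply Eventually.of_forall
      intro t
      have h0 : Tendsto (fun n : ℕ => q t + 1/((n:ℝ)+1)) atTop (𝓝 (q t)) := by
        simpa using (tendsto_const_nhds (x := q t)).add tendsto_one_div_add_atTop_nhds_zero_nat
      have hcont : ContinuousAt (fun s : ℝ => s ^ ((p-1)/2)) (q t) :=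
        Real.continuousAt_rpow_const _ _ (Or.inr (by linarith))
      have h2 := (hcont.tendsto.comp h0).const_mul p
      have h3 := h2.mul_const ‖deriv f t‖
      simpa [Function.comp_def, hq_def, sq_rpow_half (norm_nonneg (f t)) (p-1)] using h3
  exact le_of_tendsto_of_tendsto' (hlim1 x) ((hlim1 y).add hlimI)
    (fun n => step1 (1/((n:ℝ)+1)) (by positivity))

lemma avg_bound {p : ℝ} (hp : 1 ≤ p) {f : ℝ → ℂ} (hf : ContDiff ℝ 1 f) {δ : ℝ}
    (hδ : 0 < δ) (c : ℝ) {x : ℝ} (hx : x ∈ Set.Icc c (c + δ)) :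
    ‖f x‖ ^ p ≤ δ⁻¹ * (∫ y in c..(c+δ), ‖f y‖ ^ p)
      + ∫ t in c..(c+δ), p * ‖f t‖ ^ (p-1) * ‖deriv f t‖ := by
  have hcd : c ≤ c + δ := by linarith
  have hφc : Continuous fun y => ‖f y‖ ^ p :=
    hf.continuous.norm.rpow_const (fun t => Or.inr (by linarith))
  set R := ∫ t in c..(c+δ), p * ‖f t‖ ^ (p-1) * ‖deriv f t‖ with hR
  have h1 : (∫ _y in c..(c+δ), ‖f x‖ ^ p) ≤ ∫ y in c..(c+δ), (‖f y‖ ^ p + R) :=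
    intervalIntegral.integral_mono_on hcd (intervalIntegrable_const)
      ((hφc.intervalIntegrable _ _).add intervalIntegrable_const)
      (fun y hy => key_ftc hp hf hcd hx hy)
  rw [intervalIntegral.integral_const,
    intervalIntegral.integral_add (hφc.intervalIntegrable _ _) intervalIntegrable_const,
    intervalIntegral.integral_const] at h1
  simp only [add_sub_cancel_left, smul_eq_mul] at h1
  have h2 := mul_le_mul_of_nonneg_left h1 (inv_nonneg.2 hδ.le)
  rw [← mul_assoc, inv_mul_cancel₀ (ne_of_gt hδ), one_mul, mul_add, ← mul_assoc,
    inv_mul_cancel₀ (ne_of_gt hδ), one_mul] at h2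
  linarith

lemma holder_step {p : ℝ} (hp : 1 ≤ p) {f : ℝ → ℂ} (hf : ContDiff ℝ 1 f) :
    (∫⁻ t, ENNReal.ofReal (p * ‖f t‖ ^ (p-1) * ‖deriv f t‖)) ≤
      ENNReal.ofReal p * ((∫⁻ t, ENNReal.ofReal (‖f t‖ ^ p)) ^ (1 - 1/p)
        * (∫⁻ t, ENNReal.ofReal (‖deriv f t‖ ^ p)) ^ (1/p)) := by
  have hfc : Continuous f := hf.continuous
  have hf'c : Continuous (deriv f) := hf.continuous_deriv le_rfl
  rcases eq_or_lt_of_le hp with h1 | h1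
  · subst h1
    simp only [sub_self, Real.rpow_zero, Real.rpow_one, mul_one, one_mul,
      ENNReal.ofReal_one, ENNReal.rpow_zero, ENNReal.rpow_one]
    norm_num
  · have hp1 : (0:ℝ) < p - 1 := by linarith
    have hp0 : (0:ℝ) < p := by linarith
    set u : ℝ → ENNReal := fun t => ENNReal.ofReal (‖f t‖ ^ (p-1)) with hu
    set v : ℝ → ENNReal := fun t => ENNReal.ofReal (‖deriv f t‖) with hv
    have hum : AEMeasurable u volume :=
      ((hfc.norm.rpow_const (fun t => Or.inr hp1.le)).measurable.ennreal_ofReal).aemeasurable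
    have hvm : AEMeasurable v volume :=
      (hf'c.norm.measurable.ennreal_ofReal).aemeasurable
    have hconj : Real.HolderConjugate (p/(p-1)) p :=
      ((Real.holderConjugate_iff_eq_conjExponent h1).2 rfl).symm
    have H := ENNReal.lintegral_mul_le_Lp_mul_Lq volume hconj hum hvm
    have e1 : ∀ t : ℝ, ENNReal.ofReal (p * ‖f t‖ ^ (p-1) * ‖deriv f t‖)
        = ENNReal.ofReal p * (u t * v t) := by
      intro t
      rw [ENNReal.ofReal_mul (by positivity), ENNReal.ofReal_mul (by positivity), mul_assoc]
    have e2 : ∀ t : ℝ, u t ^ (p/(p-1)) = ENNReal.ofReal (‖f t‖ ^ p) := by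
      intro t
      rw [hu]
      rw [ENNReal.ofReal_rpow_of_nonneg (by positivity) (by positivity)]
      congr 1
      rw [← Real.rpow_mul (norm_nonneg _)]
      congr 1
      field_simp
    have e3 : ∀ t : ℝ, v t ^ p = ENNReal.ofReal (‖deriv f t‖ ^ p) := by
      intro t
      rw [hv, ENNReal.ofReal_rpow_of_nonneg (norm_nonneg _) hp0.le]
    have e4 : 1/(p/(p-1)) = 1 - 1/p := by field_simp
    calc (∫⁻ t, ENNReal.ofReal (p * ‖f t‖ ^ (p-1) * ‖deriv f t‖))
        = ∫⁻ t, ENNReal.ofReal p * (u t * v t) := by simp_rw [e1]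
      _ = ENNReal.ofReal p * ∫⁻ t, u t * v t :=
          lintegral_const_mul'' _ (hum.mul hvm)
      _ ≤ ENNReal.ofReal p * ((∫⁻ t, u t ^ (p/(p-1))) ^ (1/(p/(p-1)))
            * (∫⁻ t, v t ^ p) ^ (1/p)) := mul_le_mul_right H _
      _ = _ := by simp_rw [e2, e3, e4]

theorem measure_integral_bound_of_deriv (p δ : ℝ) (hp : 1 ≤ p) (hδ : 0 < δ)
    (f : ℝ → ℂ) (hf : ContDiff ℝ 1 f)
    (hfp : MemLp f (ENNReal.ofReal p) volume)
    (hf'p : MemLp (deriv f) (ENNReal.ofReal p) volume)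
    (μ : Measure ℝ) (hfin : (⨆ x : ℝ, μ (Set.Ico x (x + δ))) ≠ ⊤) :
    ∫ x : ℝ, ‖f x‖ ^ p ∂μ ≤
      (⨆ x : ℝ, μ (Set.Ico x (x + δ))).toReal *
        (δ ^ (-1 / p) * (eLpNorm f (ENNReal.ofReal p) volume).toReal +
          δ ^ (1 - 1 / p) * (eLpNorm (deriv f) (ENNReal.ofReal p) volume).toReal) ^ p := by
  have hp0 : (0:ℝ) < p := by linarith
  have hfc : Continuous f := hf.continuous
  have hf'c : Continuous (deriv f) := hf.continuous_deriv le_rfl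
  have hφc : Continuous fun y => ‖f y‖ ^ p :=
    hfc.norm.rpow_const (fun t => Or.inr hp0.le)
  have hψc : Continuous fun t => p * ‖f t‖ ^ (p-1) * ‖deriv f t‖ :=
    (continuous_const.mul (hfc.norm.rpow_const (fun t => Or.inr (by linarith)))).mul hf'c.norm
  have hψnn : ∀ t, 0 ≤ p * ‖f t‖ ^ (p-1) * ‖deriv f t‖ := fun t => by positivity
  set M := ⨆ x : ℝ, μ (Set.Ico x (x + δ)) with hM
  set a := (eLpNorm f (ENNReal.ofReal p) volume).toReal with ha
  set b := (eLpNorm (deriv f) (ENNReal.ofReal p) volume).toReal with hb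
  have ha0 : 0 ≤ a := ENNReal.toReal_nonneg
  have hb0 : 0 ≤ b := ENNReal.toReal_nonneg
  set Ia := ∫⁻ t, ENNReal.ofReal (‖f t‖ ^ p) with hIa_def
  set Ib := ∫⁻ t, ENNReal.ofReal (‖deriv f t‖ ^ p) with hIb_def
  have hP0 : (ENNReal.ofReal p) ≠ 0 := by simp [ENNReal.ofReal_eq_zero]; linarith
  have hPt : (ENNReal.ofReal p) ≠ ⊤ := ENNReal.ofReal_ne_top
  -- identification of Ia, Ib with powers of Lp norms
  have key_norm : ∀ (g : ℝ → ℂ), Continuous g → MemLp g (ENNReal.ofReal p) volume →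
      (∫⁻ t, ENNReal.ofReal (‖g t‖ ^ p)) =
        ENNReal.ofReal ((eLpNorm g (ENNReal.ofReal p) volume).toReal ^ p) := by
    intro g hgc hgp
    have h1 : eLpNorm g (ENNReal.ofReal p) volume
        = (∫⁻ t, ENNReal.ofReal (‖g t‖ ^ p)) ^ (1/p) := by
      rw [eLpNorm_eq_lintegral_rpow_enorm_toReal hP0 hPt, ENNReal.toReal_ofReal hp0.le]
      congr 1
      apply lintegral_congr
      intro x
      rw [← ofReal_norm, ENNReal.ofReal_rpow_of_nonneg (norm_nonneg _) hp0.le]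
    have h2 : (∫⁻ t, ENNReal.ofReal (‖g t‖ ^ p)) = (eLpNorm g (ENNReal.ofReal p) volume) ^ p := by
      rw [h1, ← ENNReal.rpow_mul, one_div, inv_mul_cancel₀ (ne_of_gt hp0), ENNReal.rpow_one]
    rw [h2, ← ENNReal.ofReal_rpow_of_nonneg ENNReal.toReal_nonneg hp0.le,
      ENNReal.ofReal_toReal hgp.eLpNorm_ne_top]
  have hIa : Ia = ENNReal.ofReal (a ^ p) := key_norm f hfc hfp
  have hIb : Ib = ENNReal.ofReal (b ^ p) := key_norm (deriv f) hf'c hf'p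
  -- the partition of ℝ into intervals
  set s : ℤ → Set ℝ := fun k => Set.Ico ((k:ℝ)*δ) ((k:ℝ)*δ + δ) with hs
  have hsm : ∀ k, MeasurableSet (s k) := fun k => measurableSet_Ico
  have hsd : Pairwise (Function.onFun Disjoint s) := by
    have key : ∀ m n : ℤ, m < n → Disjoint (s m) (s n) := by
      intro m n hmn
      apply Set.Ico_disjoint_Ico.2
      have h1 : (m:ℝ) + 1 ≤ n := by exact_mod_cast hmn
      have h2 : (m:ℝ)*δ + δ ≤ (n:ℝ)*δ := by nlinarith
      calc ((m:ℝ)*δ+δ) ⊓ ((n:ℝ)*δ+δ) ≤ (m:ℝ)*δ+δ := inf_le_left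
        _ ≤ (n:ℝ)*δ := h2
        _ ≤ ((m:ℝ)*δ) ⊔ ((n:ℝ)*δ) := le_sup_right
    intro k l hkl
    rcases lt_or_gt_of_ne hkl with h | h
    · exact key _ _ h
    · exact (key _ _ h).symm
  have hsU : (⋃ k, s k) = Set.univ := by
    apply Set.eq_univ_of_forall
    intro x
    apply Set.mem_iUnion.2
    refine ⟨⌊x/δ⌋, ?_, ?_⟩
    · calc ((⌊x/δ⌋:ℝ))*δ ≤ (x/δ)*δ :=
          mul_le_mul_of_nonneg_right (Int.floor_le _) hδ.le
        _ = x := div_mul_cancel₀ x (ne_of_gt hδ)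
    · have h1 := Int.lt_floor_add_one (x/δ)
      have h2 : x/δ*δ < ((⌊x/δ⌋:ℝ)+1)*δ := mul_lt_mul_of_pos_right h1 hδ
      rw [div_mul_cancel₀ x (ne_of_gt hδ)] at h2
      linarith
  -- per-interval quantities
  set D : ℤ → ℝ := fun k => δ⁻¹ * (∫ y in ((k:ℝ)*δ)..((k:ℝ)*δ+δ), ‖f y‖ ^ p)
    + ∫ t in ((k:ℝ)*δ)..((k:ℝ)*δ+δ), p * ‖f t‖ ^ (p-1) * ‖deriv f t‖ with hD
  have hAnn : ∀ k : ℤ, 0 ≤ ∫ y in ((k:ℝ)*δ)..((k:ℝ)*δ+δ), ‖f y‖ ^ p := fun k =>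
    intervalIntegral.integral_nonneg (by linarith)
      (fun u _ => Real.rpow_nonneg (norm_nonneg _) p)
  have hRnn : ∀ k : ℤ, 0 ≤ ∫ t in ((k:ℝ)*δ)..((k:ℝ)*δ+δ), p * ‖f t‖ ^ (p-1) * ‖deriv f t‖ :=
    fun k => intervalIntegral.integral_nonneg (by linarith) (fun u _ => hψnn u)
  have perk : ∀ k : ℤ, (∫⁻ x in s k, ENNReal.ofReal (‖f x‖ ^ p) ∂μ)
      ≤ ENNReal.ofReal (D k) * M := by
    intro k
    have hsub : s k ⊆ Set.Icc ((k:ℝ)*δ) ((k:ℝ)*δ + δ) := Set.Ico_subset_Icc_self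
    calc (∫⁻ x in s k, ENNReal.ofReal (‖f x‖ ^ p) ∂μ)
        ≤ ∫⁻ _x in s k, ENNReal.ofReal (D k) ∂μ :=
          setLIntegral_mono' (hsm k) (fun x hx =>
            ENNReal.ofReal_le_ofReal (avg_bound hp hf hδ _ (hsub hx)))
      _ = ENNReal.ofReal (D k) * μ (s k) := setLIntegral_const _ _
      _ ≤ ENNReal.ofReal (D k) * M :=
          mul_le_mul_right (le_iSup (fun x => μ (Set.Ico x (x+δ))) ((k:ℝ)*δ)) _
  -- identify ∑ D k with lintegrals over volume
  have hIoc_Ico : ∀ k : ℤ, (Set.Ioc ((k:ℝ)*δ) ((k:ℝ)*δ+δ)) =ᵐ[volume]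
      (Set.Ico ((k:ℝ)*δ) ((k:ℝ)*δ+δ)) :=
    fun k => (Ioc_ae_eq_Icc).trans (Ico_ae_eq_Icc).symm
  have interval_to_lint : ∀ (G : ℝ → ℝ), Continuous G → (∀ t, 0 ≤ G t) → ∀ k : ℤ,
      ENNReal.ofReal (∫ y in ((k:ℝ)*δ)..((k:ℝ)*δ+δ), G y)
        = ∫⁻ y in s k, ENNReal.ofReal (G y) := by
    intro G hGc hGnn k
    rw [intervalIntegral.integral_of_le (by linarith : (k:ℝ)*δ ≤ (k:ℝ)*δ+δ)]
    rw [ofReal_integral_eq_lintegral_ofReal hGc.integrableOn_Ioc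
      (Filter.Eventually.of_forall hGnn)]
    exact setLIntegral_congr (hIoc_Ico k)
  have sum_to_lint : ∀ (G : ℝ → ℝ), Continuous G → (∀ t, 0 ≤ G t) →
      (∑' k : ℤ, ∫⁻ y in s k, ENNReal.ofReal (G y)) = ∫⁻ y, ENNReal.ofReal (G y) := by
    intro G hGc hGnn
    rw [← lintegral_iUnion hsm hsd, hsU, setLIntegral_univ]
  have hsumD : (∑' k : ℤ, ENNReal.ofReal (D k)) ≤
      ENNReal.ofReal (δ⁻¹ * a^p + p * a^(p-1) * b) := by
    have step : ∀ k : ℤ, ENNReal.ofReal (D k)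
        = ENNReal.ofReal δ⁻¹ * (∫⁻ y in s k, ENNReal.ofReal (‖f y‖ ^ p))
          + ∫⁻ t in s k, ENNReal.ofReal (p * ‖f t‖ ^ (p-1) * ‖deriv f t‖) := by
      intro k
      rw [hD]
      dsimp only
      rw [ENNReal.ofReal_add (mul_nonneg (inv_nonneg.2 hδ.le) (hAnn k)) (hRnn k),
        ENNReal.ofReal_mul (inv_nonneg.2 hδ.le),
        interval_to_lint _ hφc (fun t => Real.rpow_nonneg (norm_nonneg _) p) k,
        interval_to_lint _ hψc hψnn k]
    calc (∑' k : ℤ, ENNReal.ofReal (D k))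
        = ENNReal.ofReal δ⁻¹ * Ia
          + ∫⁻ t, ENNReal.ofReal (p * ‖f t‖ ^ (p-1) * ‖deriv f t‖) := by
          simp_rw [step]
          rw [ENNReal.tsum_add, ENNReal.tsum_mul_left,
            sum_to_lint _ hφc (fun t => Real.rpow_nonneg (norm_nonneg _) p),
            sum_to_lint _ hψc hψnn]
      _ ≤ ENNReal.ofReal δ⁻¹ * Ia + ENNReal.ofReal p * (Ia ^ (1 - 1/p) * Ib ^ (1/p)) :=
          add_le_add_right (holder_step hp hf) _
      _ = ENNReal.ofReal (δ⁻¹ * a^p + p * a^(p-1) * b) := by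
          rw [hIa, hIb]
          rw [ENNReal.ofReal_rpow_of_nonneg (by positivity) (by
            have : 1/p ≤ 1 := by rw [div_le_one hp0]; linarith
            linarith)]
          rw [ENNReal.ofReal_rpow_of_nonneg (by positivity) (by positivity)]
          rw [← Real.rpow_mul ha0, ← Real.rpow_mul hb0]
          have ea : p * (1 - 1/p) = p - 1 := by field_simp
          have eb : p * (1/p) = 1 := by field_simp
          rw [ea, eb, Real.rpow_one]
          rw [← ENNReal.ofReal_mul (Real.rpow_nonneg ha0 (p-1)),
            ← ENNReal.ofReal_mul hp0.le,
            ← ENNReal.ofReal_mul (inv_nonneg.2 hδ.le),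
            ← ENNReal.ofReal_add (by positivity) (by positivity)]
          congr 1
          ring
  -- main ENNReal bound
  have main : (∫⁻ x, ENNReal.ofReal (‖f x‖ ^ p) ∂μ)
      ≤ ENNReal.ofReal (δ⁻¹ * a^p + p * a^(p-1) * b) * M := by
    calc (∫⁻ x, ENNReal.ofReal (‖f x‖ ^ p) ∂μ)
        = ∑' k : ℤ, ∫⁻ x in s k, ENNReal.ofReal (‖f x‖ ^ p) ∂μ := by
          rw [← lintegral_iUnion hsm hsd, hsU, setLIntegral_univ]
      _ ≤ ∑' k : ℤ, ENNReal.ofReal (D k) * M := ENNReal.tsum_le_tsum perk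
      _ = (∑' k : ℤ, ENNReal.ofReal (D k)) * M := ENNReal.tsum_mul_right
      _ ≤ _ := mul_le_mul_left hsumD _
  -- pass to real numbers
  rw [integral_eq_lintegral_of_nonneg_ae
    (Filter.Eventually.of_forall (fun x => Real.rpow_nonneg (norm_nonneg _) p))
    hφc.aestronglyMeasurable]
  have hCnn : 0 ≤ δ⁻¹ * a^p + p * a^(p-1) * b := by positivity
  have hne : ENNReal.ofReal (δ⁻¹ * a^p + p * a^(p-1) * b) * M ≠ ⊤ :=
    ENNReal.mul_ne_top ENNReal.ofReal_ne_top hfin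
  have h6 := ENNReal.toReal_mono hne main
  rw [ENNReal.toReal_mul, ENNReal.toReal_ofReal hCnn] at h6
  refine h6.trans ?_
  rw [mul_comm]
  apply mul_le_mul_of_nonneg_left _ ENNReal.toReal_nonneg
  -- final Bernoulli-type algebra
  have hd1 : (0:ℝ) ≤ δ ^ (-1/p) := Real.rpow_nonneg hδ.le _
  have hd2 : (0:ℝ) ≤ δ ^ (1-1/p) := Real.rpow_nonneg hδ.le _
  have hbern := bern hp (mul_nonneg hd1 ha0) (mul_nonneg hd2 hb0)
  have ea : (δ ^ (-1/p) * a) ^ p = δ⁻¹ * a ^ p := by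
    rw [Real.mul_rpow hd1 ha0, ← Real.rpow_mul hδ.le,
      show (-1/p)*p = -1 by field_simp, Real.rpow_neg_one]
  have eb : p * (δ ^ (-1/p) * a) ^ (p-1) * (δ ^ (1-1/p) * b) = p * a^(p-1) * b := by
    rw [Real.mul_rpow hd1 ha0, ← Real.rpow_mul hδ.le]
    have e0 : δ ^ ((-1/p)*(p-1)) * δ ^ (1-1/p) = 1 := by
      rw [← Real.rpow_add hδ, show (-1/p)*(p-1) + (1-1/p) = 0 by field_simp; ring,
        Real.rpow_zero]
    calc p * (δ ^ ((-1/p)*(p-1)) * a ^ (p-1)) * (δ ^ (1-1/p) * b)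
        = (δ ^ ((-1/p)*(p-1)) * δ ^ (1-1/p)) * (p * a^(p-1) * b) := by ring
      _ = p * a^(p-1) * b := by rw [e0, one_mul]
  calc δ⁻¹ * a^p + p * a^(p-1) * b
      = (δ ^ (-1/p) * a) ^ p + p * (δ ^ (-1/p) * a) ^ (p-1) * (δ ^ (1-1/p) * b) := by
        rw [ea, eb]
    _ ≤ (δ ^ (-1/p) * a + δ ^ (1-1/p) * b) ^ p := hbern
end

section
/- Let Ξ : ℝ → ℝ be continuous with |Ξ(x)| ≤ min(1,|x|⁻¹), let α, δ > 0, and μ a σ-finite Borel measure on ℝ with sup_{x∈ℝ} μ([x, x+δ/α]) < ∞. Then for all real a, b: ∫_ℝ Ξ(αx-a)² Ξ(αx-b)² dμ(x) ≤ 8π (C_δ²/δ) · (sup_{x∈ℝ} μ([x, x+δ/α]))/(4+(b-a)²), where C_δ = max(4, 1+9δ²). -/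
open MeasureTheory Real
open Filter Topology Set


lemma one_add_sq_pos (y : ℝ) : 0 < 1 + y^2 := by positivity

lemma integrable_qq (c : ℝ) : Integrable (fun y : ℝ => (1+y^2)⁻¹ * (1+(y-c)^2)⁻¹) := by
  have h1 : Integrable (fun y : ℝ => (1+(y-c)^2)⁻¹) := by
    have := integrable_inv_one_add_sq.comp_sub_right c
    simpa using this
  refine h1.mono ?_ ?_
  · apply Measurable.aestronglyMeasurable
    apply Measurable.mul <;> fun_prop
  · filter_upwards with y
    rw [norm_mul, norm_inv, norm_inv]
    have h2 : (0:ℝ) < 1 + y^2 := by positivity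
    have h3 : (0:ℝ) < 1 + (y-c)^2 := by positivity
    rw [Real.norm_eq_abs, Real.norm_eq_abs, abs_of_pos h2, abs_of_pos h3]
    calc (1+y^2)⁻¹ * (1+(y-c)^2)⁻¹ ≤ 1 * (1+(y-c)^2)⁻¹ := by
          gcongr
          rw [inv_le_one_iff₀]; right; nlinarith
      _ = (1+(y-c)^2)⁻¹ := one_mul _

lemma ratio_tendsto (c : ℝ) :
    Tendsto (fun y : ℝ => (1+y^2)/(1+(y-c)^2)) atTop (𝓝 1) := by
  have hsq : Tendsto (fun y : ℝ => (y^2)⁻¹) atTop (𝓝 0) :=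
    (tendsto_pow_atTop (two_ne_zero)).inv_tendsto_atTop (𝕜 := ℝ)
  have h1 : Tendsto (fun y : ℝ => (y^2)⁻¹ + 1) atTop (𝓝 (0+1)) :=
    hsq.add tendsto_const_nhds
  have hcy : Tendsto (fun y : ℝ => c / y) atTop (𝓝 0) :=
    tendsto_const_nhds.div_atTop tendsto_id
  have h2 : Tendsto (fun y : ℝ => (y^2)⁻¹ + (1 - c/y)^2) atTop (𝓝 (0 + (1-0)^2)) :=
    hsq.add ((tendsto_const_nhds.sub hcy).pow 2)
  have h3 : Tendsto (fun y : ℝ => ((y^2)⁻¹ + 1)/((y^2)⁻¹ + (1 - c/y)^2)) atTop (𝓝 1) := by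
    have := h1.div h2 (by norm_num)
    norm_num at this
    exact this
  refine h3.congr' ?_
  filter_upwards [eventually_gt_atTop (0:ℝ)] with y hy
  have hy' : y ≠ 0 := ne_of_gt hy
  have h4 : (0:ℝ) < 1 + (y-c)^2 := by positivity
  field_simp

lemma arctan_sum_tendsto (c : ℝ) :
    Tendsto (fun y : ℝ => arctan y + arctan (y - c)) atTop (𝓝 π) := by
  have t1 : Tendsto arctan atTop (𝓝 (π/2)) :=
    tendsto_arctan_atTop.mono_right nhdsWithin_le_nhds
  have t2 : Tendsto (fun y : ℝ => arctan (y - c)) atTop (𝓝 (π/2)) :=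
    t1.comp (tendsto_atTop_add_const_right atTop (-c) tendsto_id |>.congr (by
      intro x; simp [sub_eq_add_neg]))
  have := t1.add t2
  simpa [add_halves] using this

lemma J_ne (c : ℝ) (hc : c ≠ 0) :
    ∫ y in Ioi (0:ℝ), (1+y^2)⁻¹ * (1+(y-c)^2)⁻¹
      = π/(c^2+4) + Real.log (1+c^2)/(c*(c^2+4)) + Real.arctan c/(c^2+4) := by
  have hc4 : c^2 + 4 ≠ 0 := by positivity
  set P : ℝ := 2/(c*(c^2+4)) with hP
  set G : ℝ → ℝ := fun y =>
    P/2 * (Real.log (1+y^2) - Real.log (1+(y-c)^2))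
      + c*P/2 * (Real.arctan y + Real.arctan (y-c)) with hG
  have hderiv : ∀ y : ℝ, HasDerivAt G ((1+y^2)⁻¹ * (1+(y-c)^2)⁻¹) y := by
    intro y
    have h2 : (0:ℝ) < 1 + y^2 := by positivity
    have h3 : (0:ℝ) < 1 + (y-c)^2 := by positivity
    have d1 : HasDerivAt (fun y : ℝ => Real.log (1+y^2)) (2*y/(1+y^2)) y := by
      have i1 : HasDerivAt (fun y : ℝ => 1+y^2) (2*y) y := by
        simpa using (hasDerivAt_pow 2 y).const_add 1
      simpa using i1.log h2.ne'
    have d2 : HasDerivAt (fun y : ℝ => Real.log (1+(y-c)^2)) (2*(y-c)/(1+(y-c)^2)) y := by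
      have i0 : HasDerivAt (fun y : ℝ => y - c) 1 y := (hasDerivAt_id y).sub_const c
      have i1 : HasDerivAt (fun y : ℝ => 1+(y-c)^2) (2*(y-c)) y := by
        simpa using (i0.pow 2).const_add 1
      simpa using i1.log h3.ne'
    have d3 : HasDerivAt (fun y : ℝ => Real.arctan y) (1/(1+y^2)) y :=
      Real.hasDerivAt_arctan y
    have d4 : HasDerivAt (fun y : ℝ => Real.arctan (y - c)) (1/(1+(y-c)^2)) y := by
      have i0 : HasDerivAt (fun y : ℝ => y - c) 1 y := (hasDerivAt_id y).sub_const c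
      refine ((Real.hasDerivAt_arctan (y-c)).comp y i0).congr_deriv ?_
      simp
    have := ((d1.sub d2).const_mul (P/2)).add ((d3.add d4).const_mul (c*P/2))
    refine this.congr_deriv ?_
    rw [hP]
    field_simp
    ring
  have hlim : Tendsto G atTop (𝓝 (P/2 * 0 + c*P/2*π)) := by
    have hL : Tendsto (fun y : ℝ => Real.log (1+y^2) - Real.log (1+(y-c)^2)) atTop (𝓝 0) := by
      have h0 := (Real.continuousAt_log one_ne_zero).tendsto.comp (ratio_tendsto c)
      rw [Real.log_one] at h0
      refine h0.congr ?_
      intro y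
      have h2 : (0:ℝ) < 1 + y^2 := by positivity
      have h3 : (0:ℝ) < 1 + (y-c)^2 := by positivity
      simp [Function.comp, Real.log_div h2.ne' h3.ne']
    exact (hL.const_mul (P/2)).add ((arctan_sum_tendsto c).const_mul (c*P/2))
  have key := integral_Ioi_of_hasDerivAt_of_tendsto
    (f := G) (f' := fun y => (1+y^2)⁻¹ * (1+(y-c)^2)⁻¹) (a := 0)
    (hderiv 0).continuousAt.continuousWithinAt
    (fun y _ => hderiv y) ((integrable_qq c).integrableOn) hlim
  rw [key, hG, hP]
  norm_num [Real.arctan_neg, neg_sq]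
  field_simp
  ring

lemma J_zero :
    ∫ y in Ioi (0:ℝ), (1+y^2)⁻¹ * (1+(y-0)^2)⁻¹ = π/4 := by
  set H : ℝ → ℝ := fun y => (Real.arctan y + y/(1+y^2))/2 with hH
  have hderiv : ∀ y : ℝ, HasDerivAt H ((1+y^2)⁻¹ * (1+(y-0)^2)⁻¹) y := by
    intro y
    have h2 : (0:ℝ) < 1 + y^2 := by positivity
    have d1 : HasDerivAt (fun y : ℝ => Real.arctan y) (1/(1+y^2)) y :=
      Real.hasDerivAt_arctan y
    have i1 : HasDerivAt (fun y : ℝ => 1+y^2) (2*y) y := by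
      simpa using (hasDerivAt_pow 2 y).const_add 1
    have d2 : HasDerivAt (fun y : ℝ => y/(1+y^2))
        ((1*(1+y^2) - y*(2*y))/(1+y^2)^2) y := (hasDerivAt_id y).div i1 h2.ne'
    have := (d1.add d2).div_const 2
    refine this.congr_deriv ?_
    field_simp
    ring
  have hlim : Tendsto H atTop (𝓝 ((π/2 + 0)/2)) := by
    have t1 : Tendsto Real.arctan atTop (𝓝 (π/2)) :=
      tendsto_arctan_atTop.mono_right nhdsWithin_le_nhds
    have t0 : Tendsto (fun y : ℝ => y/(1+y^2)) atTop (𝓝 0) := by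
      have ha : Tendsto (fun y : ℝ => y⁻¹ + y) atTop atTop :=
        tendsto_inv_atTop_zero.add_atTop tendsto_id
      refine ha.inv_tendsto_atTop.congr' ?_
      filter_upwards [eventually_gt_atTop (0:ℝ)] with y hy
      have hy' : y ≠ 0 := ne_of_gt hy
      have h2 : (0:ℝ) < 1 + y^2 := by positivity
      rw [Pi.inv_apply]
      field_simp
    exact (t1.add t0).div_const 2
  have key := integral_Ioi_of_hasDerivAt_of_tendsto
    (f := H) (f' := fun y => (1+y^2)⁻¹ * (1+(y-0)^2)⁻¹) (a := 0)
    (hderiv 0).continuousAt.continuousWithinAt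
    (fun y _ => hderiv y) ((integrable_qq 0).integrableOn) hlim
  rw [key, hH]
  norm_num
  ring

lemma conv_cauchy (c : ℝ) :
    ∫ y : ℝ, (1+y^2)⁻¹ * (1+(y-c)^2)⁻¹ = 2 * π / (4 + c^2) := by
  rw [← intervalIntegral.integral_Iic_add_Ioi (b := (0:ℝ)) ((integrable_qq c).integrableOn)
    ((integrable_qq c).integrableOn)]
  have hneg : (∫ y in Iic (0:ℝ), (1+y^2)⁻¹ * (1+(y-c)^2)⁻¹)
      = ∫ y in Ioi (0:ℝ), (1+y^2)⁻¹ * (1+(y-(-c))^2)⁻¹ := by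
    have h0 := integral_comp_neg_Iic (0:ℝ) (fun y : ℝ => (1+y^2)⁻¹ * (1+(y-(-c))^2)⁻¹)
    rw [neg_zero] at h0
    rw [← h0]
    have he : ∀ y : ℝ, (1+(-y)^2)⁻¹ * (1+((-y)-(-c))^2)⁻¹
        = (1+y^2)⁻¹ * (1+(y-c)^2)⁻¹ := by
      intro y
      rw [show (1:ℝ)+(-y)^2 = 1+y^2 by ring, show ((-y)-(-c))^2 = (y-c)^2 by ring]
    simp_rw [he]
  rw [hneg]
  rcases eq_or_ne c 0 with rfl | hc
  · rw [neg_zero, J_zero]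
    norm_num
    ring
  · rw [J_ne c hc, J_ne (-c) (neg_ne_zero.mpr hc)]
    have hc4 : c^2 + 4 ≠ 0 := by positivity
    rw [neg_sq, Real.arctan_neg]
    field_simp
    ring



-- envelope bound
lemma env_bound {Ξ : ℝ → ℝ} (hΞ : ∀ x, |Ξ x| ≤ min 1 |x|⁻¹) (t : ℝ) :
    Ξ t ^ 2 ≤ 2*(1+t^2)⁻¹ := by
  have h2 : (0:ℝ) < 1 + t^2 := by positivity
  have hb := hΞ t
  have h0 : (0:ℝ) ≤ min 1 |t|⁻¹ := le_min (by norm_num) (inv_nonneg.mpr (abs_nonneg t))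
  have hsq : Ξ t ^ 2 ≤ (min 1 |t|⁻¹)^2 := by
    rw [← sq_abs]
    exact pow_le_pow_left₀ (abs_nonneg _) hb 2
  rw [show 2*(1+t^2)⁻¹ = 2/(1+t^2) from by ring]
  rcases le_or_gt (1 + t^2) 2 with h | h
  · have hm1 : (min 1 |t|⁻¹)^2 ≤ 1 := by
      nlinarith [min_le_left (1:ℝ) |t|⁻¹]
    rw [le_div_iff₀ h2]
    nlinarith
  · have hmt : (min 1 |t|⁻¹)^2 ≤ (t^2)⁻¹ := by
      calc (min 1 |t|⁻¹)^2 ≤ (|t|⁻¹)^2 := pow_le_pow_left₀ h0 (min_le_right _ _) 2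
        _ = (t^2)⁻¹ := by rw [inv_pow, sq_abs]
    have h2t : (0:ℝ) < t^2 := by nlinarith
    have : (t^2)⁻¹ ≤ 2/(1+t^2) := by
      rw [inv_eq_one_div, div_le_div_iff₀ h2t h2]
      nlinarith
    linarith

-- comparability
lemma comp_bound {C δ u u' : ℝ} (hC4 : (4:ℝ) ≤ C) (hC9 : 1+9*δ^2 ≤ C)
    (hd : |u - u'| ≤ δ) : 2*(1+u^2)⁻¹ ≤ C * (2*(1+u'^2)⁻¹) := by
  have h2 : (0:ℝ) < 1 + u^2 := by positivity
  have h3 : (0:ℝ) < 1 + u'^2 := by positivity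
  have h1 : (u - u')^2 ≤ δ^2 := by
    rw [← sq_abs (u - u')]
    exact pow_le_pow_left₀ (abs_nonneg _) hd 2
  have key : 1 + u'^2 ≤ C * (1 + u^2) := by
    nlinarith [sq_nonneg (u' - 2*u), mul_nonneg (by linarith : (0:ℝ) ≤ C - 4) (sq_nonneg u)]
  rw [show C*(2*(1+u'^2)⁻¹) = (2*C)/(1+u'^2) from by ring,
    show 2*(1+u^2)⁻¹ = 2/(1+u^2) from by ring, div_le_div_iff₀ h2 h3]
  nlinarith

theorem xi_product_measure_bound_dilated (Ξ : ℝ → ℝ) (hΞc : Continuous Ξ)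
    (hΞ : ∀ x, |Ξ x| ≤ min 1 |x|⁻¹) (α δ : ℝ) (hα : 0 < α) (hδ : 0 < δ)
    (μ : Measure ℝ) [SigmaFinite μ]
    (hfin : (⨆ x : ℝ, μ (Set.Icc x (x + δ / α))) ≠ ⊤) (a b : ℝ) :
    ∫ x : ℝ, Ξ (α * x - a) ^ 2 * Ξ (α * x - b) ^ 2 ∂μ ≤
      8 * π * ((max 4 (1 + 9 * δ ^ 2)) ^ 2 / δ) *
        (⨆ x : ℝ, μ (Set.Icc x (x + δ / α))).toReal / (4 + (b - a) ^ 2) := by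
  have hC4 : (4:ℝ) ≤ max 4 (1 + 9 * δ ^ 2) := le_max_left _ _
  have hC9 : 1 + 9 * δ ^ 2 ≤ max 4 (1 + 9 * δ ^ 2) := le_max_right _ _
  set C : ℝ := max 4 (1 + 9 * δ ^ 2) with hCdef
  have hCpos : (0:ℝ) < C := by linarith
  set c : ℝ := b - a with hcdef
  have hc4 : (0:ℝ) < 4 + c ^ 2 := by positivity
  set h0 : ℝ := δ / α with hh0
  have hh0pos : 0 < h0 := div_pos hδ hα
  set M := ⨆ x : ℝ, μ (Set.Icc x (x + h0)) with hMdef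
  set g : ℝ → ℝ := fun x => (2*(1+(α*x-a)^2)⁻¹) * (2*(1+(α*x-b)^2)⁻¹) with hgdef
  have hgnn : ∀ x, 0 ≤ g x := fun x => by
    rw [hgdef]; positivity
  have hf_cont : Continuous fun x : ℝ => Ξ (α*x - a) ^ 2 * Ξ (α*x - b) ^ 2 := by
    have h1 : Continuous fun x : ℝ => α*x - a := by continuity
    have h2 : Continuous fun x : ℝ => α*x - b := by continuity
    exact ((hΞc.comp h1).pow 2).mul ((hΞc.comp h2).pow 2)
  have hfnn : ∀ x, 0 ≤ Ξ (α*x - a) ^ 2 * Ξ (α*x - b) ^ 2 := fun x => by positivity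
  have hfg : ∀ x, Ξ (α*x-a) ^ 2 * Ξ (α*x-b) ^ 2 ≤ g x := fun x =>
    mul_le_mul (env_bound hΞ _) (env_bound hΞ _) (by positivity) (by positivity)
  -- integrability and value of ∫ g
  have hQ : Integrable (fun y : ℝ => (1+(y-a)^2)⁻¹ * (1+(y-b)^2)⁻¹) := by
    have hqq : Integrable (fun y : ℝ => (1+(y-a)^2)⁻¹ * (1+((y-a)-c)^2)⁻¹) :=
      (integrable_qq c).comp_sub_right a
    have he : ∀ y : ℝ, (y-a)-c = y - b := fun y => by rw [hcdef]; ring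
    simp_rw [he] at hqq
    exact hqq
  have hQα : Integrable (fun x : ℝ => (1+(α*x-a)^2)⁻¹ * (1+(α*x-b)^2)⁻¹) :=
    hQ.comp_mul_left' hα.ne'
  have hgint : Integrable g := by
    have h4 := hQα.const_mul 4
    refine h4.congr (ae_of_all _ fun x => ?_)
    rw [hgdef]; ring
  have hgval : ∫ x, g x = α⁻¹ * (8 * π / (4 + c ^ 2)) := by
    have e1 : ∫ x, g x = ∫ x, 4 * ((1+(α*x-a)^2)⁻¹ * (1+(α*x-b)^2)⁻¹) := by
      congr 1; funext x; rw [hgdef]; ring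
    rw [e1, integral_const_mul]
    have e2 := Measure.integral_comp_mul_left (fun y : ℝ => (1+(y-a)^2)⁻¹ * (1+(y-b)^2)⁻¹) α
    rw [e2, abs_of_pos (inv_pos.mpr hα), smul_eq_mul]
    have e3 : (fun y : ℝ => (1+(y-a)^2)⁻¹ * (1+(y-b)^2)⁻¹)
        = fun y : ℝ => (1+(y-a)^2)⁻¹ * (1+((y-a)-c)^2)⁻¹ := by
      funext y; rw [hcdef]; ring_nf
    rw [e3]
    have e4 := integral_sub_right_eq_self (μ := volume)
      (fun z : ℝ => (1+z^2)⁻¹ * (1+(z-c)^2)⁻¹) a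
    rw [e4, conv_cauchy c]
    ring
  -- partition
  set S : ℤ → Set ℝ := fun n => Ico ((n:ℝ)*h0) ((n:ℝ)*h0 + h0) with hSdef
  have hSmeas : ∀ n, MeasurableSet (S n) := fun n => measurableSet_Ico
  have hSdisj : Pairwise (Function.onFun Disjoint S) := by
    intro m n hmn
    simp only [Function.onFun, hSdef]
    rw [Set.Ico_disjoint_Ico]
    rcases hmn.lt_or_gt with hl | hl
    · have hmn1 : (m:ℝ) + 1 ≤ n := by exact_mod_cast hl
      refine le_trans (min_le_left _ _) (le_trans ?_ (le_max_right _ _))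
      nlinarith
    · have hmn1 : (n:ℝ) + 1 ≤ m := by exact_mod_cast hl
      refine le_trans (min_le_right _ _) (le_trans ?_ (le_max_left _ _))
      nlinarith
  have hScover : (⋃ n : ℤ, S n) = univ := by
    ext x
    simp only [mem_iUnion, mem_univ, iff_true, hSdef, mem_Ico]
    refine ⟨⌊x / h0⌋, ?_, ?_⟩
    · have := Int.sub_floor_div_mul_nonneg x hh0pos; linarith
    · have := Int.sub_floor_div_mul_lt x hh0pos; linarith
  have hμS : ∀ n, μ (S n) ≤ M := by
    intro n
    refine le_trans (measure_mono Ico_subset_Icc_self) ?_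
    exact le_iSup (fun x : ℝ => μ (Set.Icc x (x + h0))) ((n:ℝ)*h0)
  have hvol : ∀ n, (volume (S n)).toReal = h0 := by
    intro n
    rw [hSdef]
    simp only [Real.volume_Ico, add_sub_cancel_left]
    exact ENNReal.toReal_ofReal hh0pos.le
  set K : ℝ := C ^ 2 * (α/δ) with hK
  have hKnn : 0 ≤ K := by
    rw [hK]
    have : 0 ≤ α/δ := le_of_lt (div_pos hα hδ)
    positivity
  have hsup : ∀ n, ∀ x ∈ S n, g x ≤ K * ∫ x' in S n, g x' := by
    intro n x hx
    have hC2 : (0:ℝ) < C ^ 2 := by positivity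
    have hle : ∀ x' ∈ S n, g x / C ^ 2 ≤ g x' := by
      intro x' hx'
      have hxx' : |x - x'| ≤ h0 := by
        rw [hSdef] at hx hx'
        simp only [mem_Ico] at hx hx'
        rw [abs_le]
        constructor <;> [linarith [hx.1, hx'.2]; linarith [hx.2, hx'.1]]
      have hαh0 : α * h0 = δ := by
        rw [hh0]; field_simp
      have hd1 : |(α*x - a) - (α*x' - a)| ≤ δ := by
        rw [show (α*x - a) - (α*x' - a) = α*(x-x') by ring, abs_mul, abs_of_pos hα, ← hαh0]
        exact mul_le_mul_of_nonneg_left hxx' hα.le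
      have hd2 : |(α*x - b) - (α*x' - b)| ≤ δ := by
        rw [show (α*x - b) - (α*x' - b) = α*(x-x') by ring, abs_mul, abs_of_pos hα, ← hαh0]
        exact mul_le_mul_of_nonneg_left hxx' hα.le
      have b1 := comp_bound hC4 hC9 hd1
      have b2 := comp_bound hC4 hC9 hd2
      have hgg : g x ≤ C ^ 2 * g x' := by
        rw [hgdef]
        calc (2*(1+(α*x-a)^2)⁻¹) * (2*(1+(α*x-b)^2)⁻¹)
            ≤ (C*(2*(1+(α*x'-a)^2)⁻¹)) * (C*(2*(1+(α*x'-b)^2)⁻¹)) :=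
              mul_le_mul b1 b2 (by positivity) (by positivity)
          _ = C ^ 2 * ((2*(1+(α*x'-a)^2)⁻¹) * (2*(1+(α*x'-b)^2)⁻¹)) := by ring
      rw [div_le_iff₀ hC2]
      linarith [hgg]
    have hlow : g x / C ^ 2 * h0 ≤ ∫ x' in S n, g x' := by
      have hconst : ∫ _x' in S n, (g x / C ^ 2) = g x / C ^ 2 * h0 := by
        rw [setIntegral_const, smul_eq_mul, measureReal_def, hvol n]
        ring
      rw [← hconst]
      refine setIntegral_mono_on ?_ hgint.integrableOn (hSmeas n) hle
      · refine (integrableOn_const_iff enorm_ne_top).mpr (Or.inr ?_)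
        rw [hSdef]
        simp only [Real.volume_Ico]
        exact ENNReal.ofReal_lt_top
    have hKh : K = C ^ 2 / h0 := by
      rw [hK, hh0]
      field_simp
    rw [hKh, div_mul_eq_mul_div, le_div_iff₀ hh0pos]
    have hmul := mul_le_mul_of_nonneg_left hlow hC2.le
    have heq : C ^ 2 * (g x / C ^ 2 * h0) = g x * h0 := by
      field_simp
    rw [heq] at hmul
    linarith [hmul]
  -- lintegral chain
  have hflint : ∫⁻ x, ENNReal.ofReal (Ξ (α*x-a) ^ 2 * Ξ (α*x-b) ^ 2) ∂μ
      ≤ ENNReal.ofReal (K * ∫ x, g x) * M := by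
    calc ∫⁻ x, ENNReal.ofReal (Ξ (α*x-a) ^ 2 * Ξ (α*x-b) ^ 2) ∂μ
        = ∫⁻ x in ⋃ n : ℤ, S n, ENNReal.ofReal (Ξ (α*x-a) ^ 2 * Ξ (α*x-b) ^ 2) ∂μ := by
          rw [hScover, setLIntegral_univ]
      _ = ∑' n : ℤ, ∫⁻ x in S n, ENNReal.ofReal (Ξ (α*x-a) ^ 2 * Ξ (α*x-b) ^ 2) ∂μ :=
          lintegral_iUnion hSmeas hSdisj _
      _ ≤ ∑' n : ℤ, ENNReal.ofReal (K * ∫ x' in S n, g x') * M := by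
          refine ENNReal.tsum_le_tsum (fun n => ?_)
          calc ∫⁻ x in S n, ENNReal.ofReal (Ξ (α*x-a) ^ 2 * Ξ (α*x-b) ^ 2) ∂μ
              ≤ ∫⁻ _x in S n, ENNReal.ofReal (K * ∫ x' in S n, g x') ∂μ := by
                refine setLIntegral_mono measurable_const (fun x hx => ?_)
                exact ENNReal.ofReal_le_ofReal ((hfg x).trans (hsup n x hx))
            _ = ENNReal.ofReal (K * ∫ x' in S n, g x') * μ (S n) := setLIntegral_const _ _
            _ ≤ ENNReal.ofReal (K * ∫ x' in S n, g x') * M := mul_le_mul_right (hμS n) _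
      _ = (∑' n : ℤ, ENNReal.ofReal (K * ∫ x' in S n, g x')) * M := ENNReal.tsum_mul_right
      _ ≤ ENNReal.ofReal (K * ∫ x, g x) * M := by
          refine mul_le_mul_left (le_of_eq ?_) M
          have h1 : ∀ n : ℤ, ENNReal.ofReal (K * ∫ x' in S n, g x')
              = ENNReal.ofReal K * ENNReal.ofReal (∫ x' in S n, g x') :=
            fun n => ENNReal.ofReal_mul hKnn
          rw [tsum_congr h1, ENNReal.tsum_mul_left]
          have h2 : ∀ n : ℤ, ENNReal.ofReal (∫ x' in S n, g x')
              = ∫⁻ x' in S n, ENNReal.ofReal (g x') := fun n =>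
            ofReal_integral_eq_lintegral_ofReal hgint.integrableOn (ae_of_all _ hgnn)
          rw [tsum_congr h2, ← lintegral_iUnion hSmeas hSdisj, hScover, setLIntegral_univ,
            ← ofReal_integral_eq_lintegral_ofReal hgint (ae_of_all _ hgnn),
            ← ENNReal.ofReal_mul hKnn]
  -- conclusion
  rw [integral_eq_lintegral_of_nonneg_ae (ae_of_all _ hfnn) hf_cont.aestronglyMeasurable]
  have hne : ENNReal.ofReal (K * ∫ x, g x) * M ≠ ⊤ :=
    ENNReal.mul_ne_top ENNReal.ofReal_ne_top hfin
  have hKg : 0 ≤ K * ∫ x, g x := by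
    rw [hgval]
    have h8 : (0:ℝ) ≤ α⁻¹ * (8 * π / (4 + c ^ 2)) := by positivity
    exact mul_nonneg hKnn h8
  calc (∫⁻ x, ENNReal.ofReal (Ξ (α*x-a) ^ 2 * Ξ (α*x-b) ^ 2) ∂μ).toReal
      ≤ (ENNReal.ofReal (K * ∫ x, g x) * M).toReal := ENNReal.toReal_mono hne hflint
    _ = (K * ∫ x, g x) * M.toReal := by
        rw [ENNReal.toReal_mul, ENNReal.toReal_ofReal hKg]
    _ = 8 * π * (C ^ 2 / δ) * M.toReal / (4 + c ^ 2) := by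
        rw [hgval, hK]
        field_simp
end
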